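/- The Schulz identity for the tetrahedroid: 16c²·T_{a,b,c}(x₀,x₁,x₂,x₃) = −((L₁L₁′ + L₂L₂′ − L₃L₃′)² − 4L₁L₁′L₂L₂′), where L₁ = −(a−b+c)(c x₀ + x₂ + x₃), L₁′ = (−a+b+c)(−c x₀ + x₂ + x₃), L₂ = (a+b+c)(c x₀ + x₂ − x₃), L₂′ = (a+b−c)(−c x₀ + x₂ − x₃), L₃ = 2(−c x₁ − b x₂ + a x₃), L₃′ = 2(c x₁ − b x₂ + a x₃). -/
import Mathlib
set_option maxRecDepth 8000
set_option maxHeartbeats 4000000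


/-- Half the 5×5 tetrahedroid determinant `T_{a,b,c}`. -/
noncomputable def T (a b c X0 X1 X2 X3 : ℝ) : ℝ :=
  Matrix.det !![(0 : ℝ), 1, 1, 1, X0^2;
                1, 0, a^2, b^2, X1^2;
                1, a^2, 0, c^2, X2^2;
                1, b^2, c^2, 0, X3^2;
                X0^2, X1^2, X2^2, X3^2, 0] / 2

/-- Schulz' identity for the tetrahedroid. -/
theorem schulz_identity (a b c x0 x1 x2 x3 : ℝ) :
    let L1 := -(a - b + c) * (c*x0 + x2 + x3)
    let L1' := (-a + b + c) * (-c*x0 + x2 + x3)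
    let L2 := (a + b + c) * (c*x0 + x2 - x3)
    let L2' := (a + b - c) * (-c*x0 + x2 - x3)
    let L3 := 2 * (-c*x1 - b*x2 + a*x3)
    let L3' := 2 * (c*x1 - b*x2 + a*x3)
    16 * c^2 * T a b c x0 x1 x2 x3 =
      -((L1*L1' + L2*L2' - L3*L3')^2 - 4 * (L1*L1') * (L2*L2')) := by
  simp only []
  rw [T]
  simp only [Matrix.det_succ_row_zero, Fin.sum_univ_succ, Fin.sum_univ_zero,
    Matrix.submatrix_apply, Matrix.cons_val', Matrix.cons_val_zero, Matrix.cons_val_one,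
    Matrix.head_cons, Matrix.head_fin_const, Fin.succAbove, Matrix.cons_val_succ,
    Matrix.det_fin_one, Matrix.cons_val_fin_one, Matrix.empty_val',
    Matrix.cons_val_zero, Fin.isValue]
  norm_num [Fin.lt_def, Fin.castSucc, Fin.castAdd, Fin.castLE, Fin.succ]
  ring
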